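/- Let S be a generalized telescopic semigroup in ℝ spanned by {α_i}_{i=1}^r with α₁,...,α_{r-1} positive rationals, α_r irrational, and the ordered semigroup ⟨α₁,...,α_{r-1}⟩ isomorphic to a telescopic semigroup ⟨β₁,...,β_{r-1}⟩ via α_i ↦ β_i. Then every α ∈ S has a unique expression α = Σ_{i=1}^r a_i α_i with a₁, a_r ≥ 0 and 0 ≤ a_i < gcd(β₁,...,β_{i-1})/gcd(β₁,...,β_i) for 2 ≤ i ≤ r−1. -/

import Mathlib

/-- `dtel α i = gcd(α₁, …, α_i)` (generators indexed from 1). -/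
def dtel (α : ℕ → ℕ) (i : ℕ) : ℕ := (Finset.Icc 1 i).gcd α

/-- A telescopic sequence `α₁, …, α_r` of positive integers. -/
def IsTelescopic (r : ℕ) (α : ℕ → ℕ) : Prop :=
  (∀ i, 1 ≤ i → i ≤ r → 0 < α i) ∧
  dtel α r = 1 ∧
  ∀ i, 2 ≤ i → i ≤ r →
    α i / dtel α i ∈
      AddSubmonoid.closure {x : ℕ | ∃ j, 1 ≤ j ∧ j < i ∧ x = α j / dtel α (i - 1)}

lemma Icc_top (a b : ℕ) (h : a ≤ b+1) : Finset.Icc a (b+1) = insert (b+1) (Finset.Icc a b) := by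
  ext i; simp [Finset.mem_Icc]; omega

lemma dtel_dvd (β : ℕ → ℕ) {i j : ℕ} (h1 : 1 ≤ j) (h2 : j ≤ i) : dtel β i ∣ β j :=
  Finset.gcd_dvd (Finset.mem_Icc.mpr ⟨h1, h2⟩)

lemma dtel_succ (β : ℕ → ℕ) {k : ℕ} (hk : 1 ≤ k) :
    dtel β k = Nat.gcd (β k) (dtel β (k-1)) := by
  unfold dtel
  conv_lhs => rw [show k = (k-1)+1 by omega]
  rw [Icc_top 1 (k-1) (by omega), Finset.gcd_insert]
  congr 2 <;> omega

lemma dtel_pos (β : ℕ → ℕ) (h1 : 0 < β 1) {i : ℕ} (hi : 1 ≤ i) : 0 < dtel β i := by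
  rcases Nat.eq_zero_or_pos (dtel β i) with h | h
  · have := (Finset.gcd_eq_zero_iff.mp h) 1 (Finset.mem_Icc.mpr ⟨le_refl 1, hi⟩); omega
  · exact h

lemma dtel_dvd_pred (β : ℕ → ℕ) {k : ℕ} (hk : 1 ≤ k) : dtel β k ∣ dtel β (k-1) := by
  rw [dtel_succ β hk]; exact Nat.gcd_dvd_right _ _

lemma closure_repr_nat (f : ℕ → ℕ) (n : ℕ) :
    ∀ x ∈ AddSubmonoid.closure {x : ℕ | ∃ j, 1 ≤ j ∧ j < n ∧ x = f j},
      ∃ t : ℕ → ℕ, x = ∑ j ∈ Finset.Icc 1 (n-1), t j * f j := by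
  intro x hx
  induction hx using AddSubmonoid.closure_induction with
  | mem y hy =>
    obtain ⟨j, hj1, hj2, rfl⟩ := hy
    refine ⟨fun i => if i = j then 1 else 0, ?_⟩
    rw [Finset.sum_eq_single j (fun b _ hb => by simp [hb]) (fun h => absurd (Finset.mem_Icc.mpr ⟨hj1, by omega⟩) h)]
    simp
  | zero => exact ⟨0, by simp⟩
  | add x y hx hy ihx ihy =>
    obtain ⟨t, rfl⟩ := ihx; obtain ⟨s, rfl⟩ := ihy
    exact ⟨t + s, by simp [add_mul, Finset.sum_add_distrib]⟩

lemma telescopic_rel {m : ℕ} (β : ℕ → ℕ) (hβ : IsTelescopic m β) {k : ℕ}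
    (h2 : 2 ≤ k) (hk : k ≤ m) :
    ∃ t : ℕ → ℕ, (dtel β (k-1) / dtel β k) * β k = ∑ j ∈ Finset.Icc 1 (k-1), t j * β j := by
  obtain ⟨t, ht⟩ := closure_repr_nat (fun j => β j / dtel β (k-1)) k _ (hβ.2.2 k h2 hk)
  refine ⟨t, ?_⟩
  have hd1 : 0 < dtel β (k-1) := dtel_pos β (hβ.1 1 le_rfl (by omega)) (by omega)
  have hdk : 0 < dtel β k := dtel_pos β (hβ.1 1 le_rfl (by omega)) (by omega)
  have hdvd : dtel β k ∣ β k := dtel_dvd β (by omega) le_rfl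
  have hdvd2 : dtel β k ∣ dtel β (k-1) := dtel_dvd_pred β (by omega)
  have key : (β k / dtel β k) * dtel β (k-1) =
      ∑ j ∈ Finset.Icc 1 (k-1), t j * (β j / dtel β (k-1)) * dtel β (k-1) := by
    rw [ht, Finset.sum_mul]
  calc (dtel β (k-1) / dtel β k) * β k
      = (β k / dtel β k) * dtel β (k-1) := by
        obtain ⟨e, he⟩ := hdvd; obtain ⟨f, hf⟩ := hdvd2
        rw [he, hf, Nat.mul_div_cancel_left _ hdk, Nat.mul_div_cancel_left _ hdk]; ring
    _ = ∑ j ∈ Finset.Icc 1 (k-1), t j * β j := by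
        rw [key]
        refine Finset.sum_congr rfl fun j hj => ?_
        rw [Finset.mem_Icc] at hj
        rw [mul_assoc, Nat.div_mul_cancel (dtel_dvd β hj.1 hj.2)]

lemma sum_split (m k : ℕ) (hk : k + 1 ≤ m) (g : ℕ → ℕ) :
    ∑ i ∈ Finset.Icc 1 m, g i = (∑ i ∈ Finset.Icc 1 (k+1), g i) + ∑ i ∈ Finset.Icc (k+2) m, g i := by
  rw [← Finset.Ico_add_one_right_eq_Icc 1 m, ← Finset.Ico_add_one_right_eq_Icc 1 (k+1), ← Finset.Ico_add_one_right_eq_Icc (k+2) m,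
    ← Finset.sum_Ico_consecutive _ (by omega : 1 ≤ k+2) (by omega : k+2 ≤ m+1)]
  rfl

lemma reduce {m : ℕ} (β : ℕ → ℕ) (hβ : IsTelescopic m β) :
    ∀ k, k ≤ m → ∀ a : ℕ → ℕ, ∃ b : ℕ → ℕ,
      (∀ i, (i = 0 ∨ k < i) → b i = a i) ∧
      (∀ i, 2 ≤ i → i ≤ k → b i < dtel β (i-1) / dtel β i) ∧
      ∑ i ∈ Finset.Icc 1 m, b i * β i = ∑ i ∈ Finset.Icc 1 m, a i * β i := by
  intro k
  induction k with
  | zero => exact fun _ a => ⟨a, fun _ _ => rfl, by omega, rfl⟩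
  | succ k ih =>
    intro hk a
    by_cases hk2 : k + 1 < 2
    · exact ⟨a, fun _ _ => rfl, fun i h1 h2 => by omega, rfl⟩
    · have hβ1 : 0 < β 1 := hβ.1 1 le_rfl (by omega)
      have hdk : 0 < dtel β (k+1) := dtel_pos β hβ1 (by omega)
      have hdk1 : 0 < dtel β k := dtel_pos β hβ1 (by omega)
      set c := dtel β ((k+1)-1) / dtel β (k+1) with hc
      have hcc : c = dtel β k / dtel β (k+1) := by simp [hc]
      have hcpos : 0 < c := by
        rw [hcc]
        exact Nat.div_pos (Nat.le_of_dvd hdk1 (by simpa using dtel_dvd_pred β (by omega : 1 ≤ k+1))) hdk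
      obtain ⟨t, ht⟩ := telescopic_rel β hβ (by omega : 2 ≤ k+1) hk
      simp only [Nat.add_sub_cancel] at ht
      set q := a (k+1) / c with hq
      set s := a (k+1) % c with hs
      have has : a (k+1) = c * q + s := (Nat.div_add_mod _ _).symm
      have hslt : s < c := Nat.mod_lt _ hcpos
      set a' : ℕ → ℕ := fun i => if i = k+1 then s else if 1 ≤ i ∧ i ≤ k then a i + q * t i else a i with ha'
      have hsum : ∑ i ∈ Finset.Icc 1 m, a' i * β i = ∑ i ∈ Finset.Icc 1 m, a i * β i := by
        rw [sum_split m k hk, sum_split m k hk]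
        have htail : ∑ i ∈ Finset.Icc (k+2) m, a' i * β i = ∑ i ∈ Finset.Icc (k+2) m, a i * β i := by
          refine Finset.sum_congr rfl fun i hi => ?_
          rw [Finset.mem_Icc] at hi
          simp only [ha']
          rw [if_neg (by omega), if_neg (by omega)]
        rw [htail]
        congr 1
        rw [Finset.sum_Icc_succ_top (by omega : 1 ≤ k+1), Finset.sum_Icc_succ_top (by omega : 1 ≤ k+1)]
        have hhead : ∑ i ∈ Finset.Icc 1 k, a' i * β i
            = (∑ i ∈ Finset.Icc 1 k, a i * β i) + q * (c * β (k+1)) := by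
          rw [hcc, ht, Finset.mul_sum, ← Finset.sum_add_distrib]
          refine Finset.sum_congr rfl fun i hi => ?_
          rw [Finset.mem_Icc] at hi
          simp only [ha']
          rw [if_neg (by omega), if_pos (by omega)]
          ring
        have hha : a' (k+1) = s := by simp [ha']
        rw [hhead, hha, has]
        ring
      obtain ⟨b, hb1, hb2, hb3⟩ := ih (by omega) a'
      refine ⟨b, ?_, ?_, ?_⟩
      · intro i hi
        rw [hb1 i (by omega)]
        simp only [ha']
        rw [if_neg (by omega), if_neg (by omega)]
      · intro i h2 hik1
        rcases Nat.lt_or_ge i (k+1) with h | h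
        · exact hb2 i h2 (by omega)
        · have : i = k+1 := by omega
          subst this
          rw [hb1 (k+1) (by omega)]
          simpa [ha', hcc] using hslt
      · rw [hb3, hsum]

lemma unique_aux {m : ℕ} (β : ℕ → ℕ) (hβ : IsTelescopic m β) (hm : 1 ≤ m) (a b : ℕ → ℕ)
    (hab : ∀ i, 2 ≤ i → i ≤ m →
      a i < dtel β (i-1) / dtel β i ∧ b i < dtel β (i-1) / dtel β i)
    (heq : ∑ i ∈ Finset.Icc 1 m, a i * β i = ∑ i ∈ Finset.Icc 1 m, b i * β i) :
    ∀ j, j ≤ m → (∀ i, m - j < i → i ≤ m → a i = b i) ∧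
      (∑ i ∈ Finset.Icc 1 (m-j), a i * β i = ∑ i ∈ Finset.Icc 1 (m-j), b i * β i) := by
  have hβ1 : 0 < β 1 := hβ.1 1 le_rfl hm
  intro j
  induction j with
  | zero => exact fun _ => ⟨fun i h1 h2 => by omega, by simpa using heq⟩
  | succ j ih =>
    intro hj
    obtain ⟨htail, hsum⟩ := ih (by omega)
    set K := m - j with hK
    have hK1 : 1 ≤ K := by omega
    have hsplit : ∀ f : ℕ → ℕ, ∑ i ∈ Finset.Icc 1 K, f i * β i
        = (∑ i ∈ Finset.Icc 1 (K-1), f i * β i) + f K * β K := by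
      intro f
      conv_lhs => rw [show K = (K-1)+1 by omega]
      rw [Finset.sum_Icc_succ_top (by omega : 1 ≤ K-1+1), show K-1+1 = K by omega]
    rw [hsplit a, hsplit b] at hsum
    have hmain : a K = b K := by
      rcases Nat.lt_or_ge K 2 with h2 | h2
      · -- K = 1
        have : K = 1 := by omega
        rw [this] at hsum ⊢
        simp at hsum
        rcases hsum with h | h
        · exact h
        · omega
      · set d' := dtel β (K-1) with hd'
        set g := dtel β K with hg
        have hgpos : 0 < g := dtel_pos β hβ1 (by omega)
        have hd'pos : 0 < d' := dtel_pos β hβ1 (by omega)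
        have hgcd : g = Nat.gcd (β K) d' := dtel_succ β (by omega)
        set c := d' / g with hc
        have haK : a K < c := (hab K h2 (by omega)).1
        have hbK : b K < c := (hab K h2 (by omega)).2
        have hcop : Nat.Coprime (β K / g) c := by
          rw [hc, hgcd]
          exact Nat.coprime_div_gcd_div_gcd (by rw [← hgcd]; exact hgpos)
        have hdvdA : (d' : ℤ) ∣ ∑ i ∈ Finset.Icc 1 (K-1), (a i : ℤ) * β i := by
          refine Finset.dvd_sum fun i hi => ?_
          rw [Finset.mem_Icc] at hi
          exact Dvd.dvd.mul_left (Int.natCast_dvd_natCast.mpr (dtel_dvd β hi.1 hi.2)) _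
        have hdvdB : (d' : ℤ) ∣ ∑ i ∈ Finset.Icc 1 (K-1), (b i : ℤ) * β i := by
          refine Finset.dvd_sum fun i hi => ?_
          rw [Finset.mem_Icc] at hi
          exact Dvd.dvd.mul_left (Int.natCast_dvd_natCast.mpr (dtel_dvd β hi.1 hi.2)) _
        have hsumZ : ((a K : ℤ) - b K) * β K =
            (∑ i ∈ Finset.Icc 1 (K-1), (b i : ℤ) * β i) - ∑ i ∈ Finset.Icc 1 (K-1), (a i : ℤ) * β i := by
          have := congrArg (fun n : ℕ => (n : ℤ)) hsum
          push_cast at this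
          linarith
        have hdvdD : (d' : ℤ) ∣ ((a K : ℤ) - b K) * β K := by
          rw [hsumZ]; exact dvd_sub hdvdB hdvdA
        have hβKg : β K = (β K / g) * g := (Nat.div_mul_cancel (dtel_dvd β (by omega) le_rfl)).symm
        have hd'g : d' = c * g := by
          rw [hc]
          exact (Nat.div_mul_cancel (dtel_dvd_pred β (by omega))).symm
        have hcd : (c : ℤ) ∣ ((a K : ℤ) - b K) := by
          have h1 : (c : ℤ) * g ∣ (((a K : ℤ) - b K) * (β K / g)) * g := by
            have := hdvdD
            rw [hd'g] at this
            push_cast at this ⊢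
            calc (c:ℤ) * g ∣ ((a K : ℤ) - b K) * β K := this
              _ = (((a K : ℤ) - b K) * (β K / g : ℕ)) * g := by
                  conv_lhs => rw [hβKg]
                  push_cast; ring
          have h2 : (c : ℤ) ∣ ((a K : ℤ) - b K) * (β K / g : ℕ) :=
            (mul_dvd_mul_iff_right (by exact_mod_cast hgpos.ne' : (g:ℤ) ≠ 0)).mp h1
          have hcop' : IsCoprime ((c : ℕ) : ℤ) ((β K / g : ℕ) : ℤ) := by
            rw [Int.isCoprime_iff_gcd_eq_one, Int.gcd_natCast_natCast]
            exact (Nat.coprime_comm.mp hcop)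
          exact hcop'.dvd_of_dvd_mul_right h2
        by_contra hne
        have hD0 : (a K : ℤ) - b K ≠ 0 := by
          intro h; apply hne; omega
        have habs : |((a K : ℤ) - b K)| < c := by
          rw [abs_lt]; omega
        have := Int.le_of_dvd (abs_pos.mpr hD0) ((dvd_abs _ _).mpr hcd)
        omega
    refine ⟨fun i h1 h2 => ?_, ?_⟩
    · rcases Nat.lt_or_ge (m - j) i with h | h
      · exact htail i h h2
      · have : i = K := by omega
        rw [this]; exact hmain
    · have : m - (j+1) = K - 1 := by omega
      rw [this]
      rw [hmain] at hsum
      exact Nat.add_right_cancel hsum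

lemma unique_repr {m : ℕ} (β : ℕ → ℕ) (hβ : IsTelescopic m β) (hm : 1 ≤ m) (a b : ℕ → ℕ)
    (hab : ∀ i, 2 ≤ i → i ≤ m →
      a i < dtel β (i-1) / dtel β i ∧ b i < dtel β (i-1) / dtel β i)
    (heq : ∑ i ∈ Finset.Icc 1 m, a i * β i = ∑ i ∈ Finset.Icc 1 m, b i * β i) :
    ∀ i, 1 ≤ i → i ≤ m → a i = b i := by
  intro i h1 h2
  exact ((unique_aux β hβ hm a b hab heq m le_rfl).1) i (by omega) h2

/-- unique representation in a generalized telescopic semigroup in ℝ: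
`α₁, …, α_{r-1}` are positive rationals, `α_r` is irrational, and `⟨α₁,…,α_{r-1}⟩` is
isomorphic as an ordered semigroup to a telescopic semigroup `⟨β₁,…,β_{r-1}⟩` via
`α_i ↦ β_i`. Then every element of the semigroup spanned by the `α_i` is uniquely
`Σ a_i α_i` with `a₁, a_r ≥ 0` and `0 ≤ a_i < gcd(β₁,…,β_{i-1})/gcd(β₁,…,β_i)`
for `2 ≤ i ≤ r-1`. -/
theorem generalized_telescopic_R_unique_representation (r : ℕ) (hr : 2 ≤ r)
    (α : ℕ → ℝ) (β : ℕ → ℕ) (hβ : IsTelescopic (r - 1) β)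
    (hrat : ∀ i, 1 ≤ i → i ≤ r - 1 → ∃ q : ℚ, 0 < q ∧ α i = (q : ℝ))
    (hirr : Irrational (α r)) (hrpos : 0 < α r)
    (hwf : Set.IsWF {x : ℝ |
      x ∈ AddSubmonoid.closure {y : ℝ | ∃ i, 1 ≤ i ∧ i ≤ r ∧ y = α i}})
    (hiso : ∀ a b : ℕ → ℕ,
      (∑ i ∈ Finset.Icc 1 (r - 1), (a i : ℝ) * α i =
          ∑ i ∈ Finset.Icc 1 (r - 1), (b i : ℝ) * α i) ↔
        (∑ i ∈ Finset.Icc 1 (r - 1), a i * β i = ∑ i ∈ Finset.Icc 1 (r - 1), b i * β i))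
    (hord : ∀ a b : ℕ → ℕ,
      (∑ i ∈ Finset.Icc 1 (r - 1), (a i : ℝ) * α i ≤
          ∑ i ∈ Finset.Icc 1 (r - 1), (b i : ℝ) * α i) ↔
        (∑ i ∈ Finset.Icc 1 (r - 1), a i * β i ≤ ∑ i ∈ Finset.Icc 1 (r - 1), b i * β i)) :
    ∀ x ∈ AddSubmonoid.closure {y : ℝ | ∃ i, 1 ≤ i ∧ i ≤ r ∧ y = α i},
      ∃! a : ℕ → ℕ,
        (∀ i, (i = 0 ∨ r < i) → a i = 0) ∧
        (∀ i, 2 ≤ i → i ≤ r - 1 → a i < dtel β (i - 1) / dtel β i) ∧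
        x = ∑ i ∈ Finset.Icc 1 r, (a i : ℝ) * α i := by
  intro x hx
  set m := r - 1 with hm
  have hm1 : 1 ≤ m := by omega
  have hr1 : m + 1 = r := by omega
  have hrepr : ∃ a : ℕ → ℕ, (∀ i, (i = 0 ∨ r < i) → a i = 0) ∧
      x = ∑ i ∈ Finset.Icc 1 r, (a i : ℝ) * α i := by
    induction hx using AddSubmonoid.closure_induction with
    | mem y hy =>
      obtain ⟨j, hj1, hj2, rfl⟩ := hy
      refine ⟨fun i => if i = j then 1 else 0, fun i hi => by show (if i = j then 1 else 0) = 0; rw [if_neg (by omega)], ?_⟩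
      rw [Finset.sum_eq_single j (fun b _ hb => by simp [hb])
        (fun h => absurd (Finset.mem_Icc.mpr ⟨hj1, hj2⟩) h)]
      simp
    | zero => exact ⟨0, fun _ _ => rfl, by simp⟩
    | add y z hy hz ihy ihz =>
      obtain ⟨ta, h1, rfl⟩ := ihy
      obtain ⟨tb, h2, rfl⟩ := ihz
      refine ⟨ta + tb, fun i hi => by simp [h1 i hi, h2 i hi], ?_⟩
      rw [← Finset.sum_add_distrib]
      refine Finset.sum_congr rfl fun i _ => ?_
      simp only [Pi.add_apply]
      push_cast; ring
  have hQsum : ∀ c : ℕ → ℕ, ∃ q : ℚ,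
      ∑ i ∈ Finset.Icc 1 m, (c i : ℝ) * α i = (q : ℝ) := by
    intro c
    set Q : ℕ → ℚ := fun i => if h : 1 ≤ i ∧ i ≤ m then (hrat i h.1 h.2).choose else 0 with hQdef
    refine ⟨∑ i ∈ Finset.Icc 1 m, (c i : ℚ) * Q i, ?_⟩
    push_cast
    refine Finset.sum_congr rfl fun i hi => ?_
    rw [Finset.mem_Icc] at hi
    have : α i = ((Q i : ℚ) : ℝ) := by
      simp only [hQdef, dif_pos (⟨hi.1, hi.2⟩ : 1 ≤ i ∧ i ≤ m)]
      exact (hrat i hi.1 hi.2).choose_spec.2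
    rw [this]
  have hsplit : ∀ c : ℕ → ℕ, ∑ i ∈ Finset.Icc 1 r, (c i : ℝ) * α i
      = (∑ i ∈ Finset.Icc 1 m, (c i : ℝ) * α i) + c r * α r := by
    intro c
    conv_lhs => rw [← hr1]
    rw [Finset.sum_Icc_succ_top (by omega : 1 ≤ m + 1), hr1]
  have huniq : ∀ A B : ℕ → ℕ,
      (∀ i, (i = 0 ∨ r < i) → A i = 0) →
      (∀ i, 2 ≤ i → i ≤ m → A i < dtel β (i-1) / dtel β i) →
      (∀ i, (i = 0 ∨ r < i) → B i = 0) →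
      (∀ i, 2 ≤ i → i ≤ m → B i < dtel β (i-1) / dtel β i) →
      ∑ i ∈ Finset.Icc 1 r, (A i : ℝ) * α i = ∑ i ∈ Finset.Icc 1 r, (B i : ℝ) * α i →
      A = B := by
    intro A B hA0 hAc hB0 hBc hABeq
    rw [hsplit A, hsplit B] at hABeq
    obtain ⟨qA, hqA⟩ := hQsum A
    obtain ⟨qB, hqB⟩ := hQsum B
    have hr' : A r = B r := by
      by_contra hne
      apply hirr
      refine ⟨(qA - qB) / ((B r : ℚ) - A r), ?_⟩
      have hdenR : ((B r : ℝ) - (A r : ℝ)) ≠ 0 := by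
        intro h
        have h2 : (B r : ℝ) = A r := sub_eq_zero.mp h
        have h3 : B r = A r := by exact_mod_cast h2
        exact hne h3.symm
      push_cast
      rw [div_eq_iff hdenR]
      rw [hqA, hqB] at hABeq
      linear_combination hABeq
    have heqm : ∑ i ∈ Finset.Icc 1 m, (A i : ℝ) * α i
        = ∑ i ∈ Finset.Icc 1 m, (B i : ℝ) * α i := by
      rw [hr'] at hABeq
      linarith
    have hnat := (hiso A B).mp heqm
    have hmid := unique_repr β hβ hm1 A B (fun i h2 hi => ⟨hAc i h2 hi, hBc i h2 hi⟩) hnat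
    funext i
    rcases Nat.lt_or_ge i 1 with h | h
    · rw [hA0 i (by omega), hB0 i (by omega)]
    · rcases Nat.lt_or_ge i r with h2 | h2
      · exact hmid i h (by omega)
      · rcases Nat.eq_or_lt_of_le h2 with h3 | h3
        · subst h3; exact hr'
        · rw [hA0 i (by omega), hB0 i (by omega)]
  obtain ⟨a, ha0, hax⟩ := hrepr
  obtain ⟨b, hb1, hb2, hb3⟩ := reduce β hβ m le_rfl a
  have hbx : x = ∑ i ∈ Finset.Icc 1 r, (b i : ℝ) * α i := by
    rw [hax, hsplit a, hsplit b, hb1 r (by omega)]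
    congr 1
    exact ((hiso a b).mpr hb3.symm)
  refine ⟨b, ⟨?_, ?_, hbx⟩, ?_⟩
  · intro i hi
    rw [hb1 i (by omega)]
    exact ha0 i hi
  · exact hb2
  · intro y hy
    exact huniq y b hy.1 hy.2.1
      (fun i hi => by rw [hb1 i (by omega)]; exact ha0 i hi) hb2
      (by rw [← hy.2.2, ← hbx])
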